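/- arXiv:2103.16261 — 2 statements merged into one kernel-verified Lean document; each statement's English description precedes it below -/
import Mathlib

section
/- Let y ∈ W^{1,p}(Ω;ℝ³) with det ∇y > 0 almost everywhere in Ω. Then y is almost everywhere injective if and only if it satisfies the Ciarlet–Nečas condition ∫_Ω det ∇y dx ≤ ℒ³(y(Ω)). -/
noncomputable section
open MeasureTheory Set Filter Topology

/-- We model `ℝ³` as `Fin 3 → ℝ` (with Lebesgue measure `volume`). -/
abbrev V3 := Fin 3 → ℝ
/-- 3×3 real matrices. -/
abbrev M3 := Matrix (Fin 3) (Fin 3) ℝ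

/-- Euclidean norm of a vector in `ℝ³`. -/
def vnorm (v : V3) : ℝ := Real.sqrt (∑ i, (v i) ^ 2)

/-- Frobenius norm of a matrix. -/
def mnorm (A : M3) : ℝ := Real.sqrt (∑ i, ∑ j, (A i j) ^ 2)

/-- The (a.e.-defined) gradient matrix of `y : ℝ³ → ℝ³`, `(∇y)_{ij} = ∂_j y_i`. -/
def gradM (y : V3 → V3) (x : V3) : M3 := Matrix.of fun i j => fderiv ℝ y x (Pi.single j 1) i

/-- Jacobian determinant `det ∇y`. -/
def detG (y : V3 → V3) (x : V3) : ℝ := (gradM y x).det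

/-- Cofactor matrix `cof A` (transpose of the adjugate). -/
def cofM (A : M3) : M3 := Matrix.transpose (Matrix.adjugate A)

/-- `adj A`, the transpose of the cofactor matrix (the classical adjugate). -/
def adjM (A : M3) : M3 := Matrix.adjugate A

/-- Gradient (as a vector) of a scalar function on `ℝ³`. -/
def gradS (φ : V3 → ℝ) (ξ : V3) : V3 := fun j => fderiv ℝ φ ξ (Pi.single j 1)

/-- Divergence of a vector field on `ℝ³`. -/
def divV (ψ : V3 → V3) (ξ : V3) : ℝ := ∑ i, fderiv ℝ ψ ξ (Pi.single i 1) i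

/-- The deformed configuration `Ω^y := y(Ω) \ y(∂Ω)`. -/
def defConfig (y : V3 → V3) (Ω : Set V3) : Set V3 := y '' Ω \ y '' frontier Ω

/-- `y` is almost everywhere injective on `Ω`: injective off a Lebesgue-null set. -/
def AEInjOn (y : V3 → V3) (Ω : Set V3) : Prop :=
  ∃ X ⊆ Ω, volume X = 0 ∧ Set.InjOn y (Ω \ X)

/-- Membership in `W^{1,p}(Ω;ℝ³)` (`p > 3`), identified with the continuous representative:
continuity up to the boundary, a.e. differentiability, and `L^p`-integrability of the
gradient. -/
def W1p (y : V3 → V3) (Ω : Set V3) (p : ℝ) : Prop :=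
  ContinuousOn y (closure Ω) ∧
  (∀ᵐ x ∂volume.restrict Ω, DifferentiableAt ℝ y x) ∧
  (∫⁻ x in Ω, ENNReal.ofReal (mnorm (gradM y x) ^ p)) < ⊤

/-- Lusin property (N) on a set `s`: null sets are mapped to null sets. -/
def LusinN (y : V3 → V3) (s : Set V3) : Prop :=
  ∀ A ⊆ s, volume A = 0 → volume (y '' A) = 0

/-! ### Auxiliary lemmas -/

lemma gradM_eq_toMatrix (y : V3 → V3) (x : V3) :
    gradM y x = LinearMap.toMatrix (Pi.basisFun ℝ (Fin 3)) (Pi.basisFun ℝ (Fin 3))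
      (fderiv ℝ y x : V3 →ₗ[ℝ] V3) := by
  ext i j
  simp [LinearMap.toMatrix_apply, gradM]

lemma detG_eq (y : V3 → V3) (x : V3) : detG y x = (fderiv ℝ y x).det := by
  rw [ContinuousLinearMap.det, ← LinearMap.det_toMatrix (Pi.basisFun ℝ (Fin 3)), detG,
    gradM_eq_toMatrix]

lemma measurable_detG (y : V3 → V3) : Measurable (detG y) := by
  have h : ∀ i j, Measurable (fun x => gradM y x i j) := by
    intro i j
    exact (measurable_fderiv_apply_const ℝ y (Pi.single j 1)).eval
  unfold detG
  rw [show (fun x => (gradM y x).det) = fun x =>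
    ((gradM y x 0 0) * (gradM y x 1 1) * (gradM y x 2 2) -
     (gradM y x 0 0) * (gradM y x 1 2) * (gradM y x 2 1) -
     (gradM y x 0 1) * (gradM y x 1 0) * (gradM y x 2 2) +
     (gradM y x 0 1) * (gradM y x 1 2) * (gradM y x 2 0) +
     (gradM y x 0 2) * (gradM y x 1 0) * (gradM y x 2 1) -
     (gradM y x 0 2) * (gradM y x 1 1) * (gradM y x 2 0)) from by
      funext x; rw [Matrix.det_fin_three]]
  fun_prop

lemma mnorm_nonneg (A : M3) : 0 ≤ mnorm A := Real.sqrt_nonneg _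

lemma abs_entry_le_mnorm (A : M3) (i j : Fin 3) : |A i j| ≤ mnorm A := by
  rw [mnorm, ← Real.sqrt_sq_eq_abs]
  apply Real.sqrt_le_sqrt
  calc (A i j)^2 ≤ ∑ j', (A i j')^2 :=
        Finset.single_le_sum (f := fun j' => (A i j')^2) (fun _ _ => sq_nonneg _)
          (Finset.mem_univ j)
    _ ≤ ∑ i', ∑ j', (A i' j')^2 :=
        Finset.single_le_sum (f := fun i' => ∑ j', (A i' j')^2)
          (fun _ _ => Finset.sum_nonneg fun _ _ => sq_nonneg _) (Finset.mem_univ i)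

lemma abs_det_le_mnorm (A : M3) : |A.det| ≤ 6 * mnorm A ^ 3 := by
  rw [Matrix.det_apply]
  calc |∑ σ : Equiv.Perm (Fin 3), Equiv.Perm.sign σ • ∏ i, A (σ i) i|
      ≤ ∑ σ : Equiv.Perm (Fin 3), |Equiv.Perm.sign σ • ∏ i, A (σ i) i| :=
        Finset.abs_sum_le_sum_abs _ _
    _ ≤ ∑ σ : Equiv.Perm (Fin 3), mnorm A ^ 3 := by
        apply Finset.sum_le_sum
        intro σ _
        rw [Units.smul_def, zsmul_eq_mul, abs_mul]
        have h1 : |(((Equiv.Perm.sign σ : ℤˣ) : ℤ) : ℝ)| = 1 := by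
          rcases Int.units_eq_one_or (Equiv.Perm.sign σ) with h | h <;> simp [h]
        rw [h1, one_mul]
        calc |∏ i, A (σ i) i| = ∏ i, |A (σ i) i| := by rw [Finset.abs_prod]
          _ ≤ ∏ _i : Fin 3, mnorm A := Finset.prod_le_prod (fun _ _ => abs_nonneg _)
              (fun i _ => abs_entry_le_mnorm A (σ i) i)
          _ = mnorm A ^ 3 := by simp [Finset.prod_const]
    _ = 6 * mnorm A ^ 3 := by
        rw [Finset.sum_const, Finset.card_univ]
        simp [Fintype.card_perm]
        norm_num [Nat.factorial]

lemma cube_le_one_add_rpow (t p : ℝ) (ht : 0 ≤ t) (hp : 3 < p) : t ^ 3 ≤ 1 + t ^ p := by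
  rcases le_or_gt t 1 with h | h
  · have h1 : t ^ 3 ≤ 1 := pow_le_one₀ ht h
    have h2 : 0 ≤ t ^ p := Real.rpow_nonneg ht p
    linarith
  · have h3 : t ^ 3 = t ^ ((3:ℕ):ℝ) := (Real.rpow_natCast t 3).symm
    rw [h3]
    have := Real.rpow_le_rpow_of_exponent_le h.le (by push_cast; linarith : ((3:ℕ):ℝ) ≤ p)
    linarith

/-- Ciarlet–Nečas condition.
Let `Ω ⊂ ℝ³` be a bounded Lipschitz domain, `p > 3`, and `y ∈ W^{1,p}(Ω;ℝ³)` (continuous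
representative, with the Lusin property (N)) with `det ∇y > 0` a.e. in `Ω`. Then `y` is almost
everywhere injective if and only if `∫_Ω det ∇y dx ≤ ℒ³(y(Ω))`. -/
theorem aeInjective_iff_ciarlet_necas
    (Ω : Set V3) (hΩo : IsOpen Ω) (hΩb : Bornology.IsBounded Ω) (hΩne : Ω.Nonempty)
    (p : ℝ) (hp : 3 < p)
    (y : V3 → V3) (hy : W1p y Ω p)
    (hLusin : LusinN y (closure Ω))
    (hdet : ∀ᵐ x ∂volume.restrict Ω, 0 < detG y x) :
    AEInjOn y Ω ↔ (∫ x in Ω, detG y x) ≤ (volume (y '' Ω)).toReal := by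
  obtain ⟨hcont, hdiff, hLp⟩ := hy
  have hΩm : MeasurableSet Ω := hΩo.measurableSet
  set s : Set V3 := Ω ∩ ({x | DifferentiableAt ℝ y x} ∩ {x | 0 < detG y x}) with hs_def
  have hsm : MeasurableSet s := hΩm.inter ((measurableSet_of_differentiableAt ℝ y).inter
    (measurableSet_lt measurable_const (measurable_detG y)))
  have hsΩ : s ⊆ Ω := inter_subset_left
  have hsdiff : ∀ x ∈ s, DifferentiableAt ℝ y x := fun x hx => hx.2.1
  have hsdet : ∀ x ∈ s, 0 < detG y x := fun x hx => hx.2.2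
  -- the complement of `s` in `Ω` is null
  have hΩs0 : volume (Ω \ s) = 0 := by
    have h := hdiff.and hdet
    have hmb : MeasurableSet {x | ¬ (DifferentiableAt ℝ y x ∧ 0 < detG y x)} :=
      ((measurableSet_of_differentiableAt ℝ y).inter
        (measurableSet_lt measurable_const (measurable_detG y))).compl
    have h2 : volume ({x | ¬ (DifferentiableAt ℝ y x ∧ 0 < detG y x)} ∩ Ω) = 0 := by
      rw [← Measure.restrict_apply' hΩm]
      exact ae_iff.mp h
    refine measure_mono_null ?_ h2
    intro x hx
    exact ⟨fun hc => hx.2 ⟨hx.1, hc⟩, hx.1⟩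
  -- integrability bounds
  have hmn : ∀ x, ENNReal.ofReal |detG y x| ≤
      6 + 6 * ENNReal.ofReal (mnorm (gradM y x) ^ p) := by
    intro x
    have h1 : |detG y x| ≤ 6 * mnorm (gradM y x) ^ 3 := abs_det_le_mnorm _
    have h2 : mnorm (gradM y x) ^ 3 ≤ 1 + mnorm (gradM y x) ^ p :=
      cube_le_one_add_rpow _ p (mnorm_nonneg _) hp
    have h3 : 0 ≤ mnorm (gradM y x) ^ p := Real.rpow_nonneg (mnorm_nonneg _) p
    calc ENNReal.ofReal |detG y x| ≤ ENNReal.ofReal (6 + 6 * mnorm (gradM y x) ^ p) :=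
          ENNReal.ofReal_le_ofReal (by linarith)
      _ = 6 + 6 * ENNReal.ofReal (mnorm (gradM y x) ^ p) := by
          rw [ENNReal.ofReal_add (by norm_num) (by positivity),
            ENNReal.ofReal_mul (by norm_num)]
          norm_num
  have hIfin : (∫⁻ x in Ω, ENNReal.ofReal |detG y x|) < ⊤ := by
    calc (∫⁻ x in Ω, ENNReal.ofReal |detG y x|)
        ≤ ∫⁻ x in Ω, (6 + 6 * ENNReal.ofReal (mnorm (gradM y x) ^ p)) :=
          lintegral_mono fun x => hmn x
      _ = 6 * volume Ω + 6 * ∫⁻ x in Ω, ENNReal.ofReal (mnorm (gradM y x) ^ p) := by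
          rw [lintegral_add_left measurable_const, lintegral_const_mul' _ _ (by norm_num),
            setLIntegral_const]
      _ < ⊤ := by
          apply ENNReal.add_lt_top.mpr
          constructor
          · exact ENNReal.mul_lt_top (by norm_num) hΩb.measure_lt_top
          · exact ENNReal.mul_lt_top (by norm_num) hLp
  have hInt : IntegrableOn (detG y) Ω := by
    refine ⟨(measurable_detG y).aestronglyMeasurable, ?_⟩
    rw [hasFiniteIntegral_iff_norm]
    simpa [Real.norm_eq_abs] using hIfin
  have hnn : 0 ≤ᵐ[volume.restrict Ω] detG y := hdet.mono fun x hx => hx.le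
  have hinteq : ENNReal.ofReal (∫ x in Ω, detG y x) = ∫⁻ x in Ω, ENNReal.ofReal (detG y x) :=
    ofReal_integral_eq_lintegral_ofReal hInt hnn
  have hdetfin : (∫⁻ x in Ω, ENNReal.ofReal (detG y x)) < ⊤ :=
    lt_of_le_of_lt (lintegral_mono fun x => ENNReal.ofReal_le_ofReal (le_abs_self _)) hIfin
  have himfin : volume (y '' Ω) < ⊤ := by
    have hcl : IsCompact (closure Ω) := hΩb.isCompact_closure
    have him : IsCompact (y '' closure Ω) := hcl.image_of_continuousOn hcont
    exact lt_of_le_of_lt (measure_mono (image_mono subset_closure)) him.measure_lt_top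
  constructor
  · -- a.e. injective ⇒ Ciarlet–Nečas
    rintro ⟨X, hXΩ, hX0, hinj⟩
    set X' := toMeasurable volume X with hX'def
    have hX'0 : volume X' = 0 := by rw [hX'def, measure_toMeasurable]; exact hX0
    set t := s \ X' with ht_def
    have htm : MeasurableSet t := hsm.diff (measurableSet_toMeasurable _ _)
    have hinj' : InjOn y t := by
      apply hinj.mono
      intro x hx
      exact ⟨hsΩ hx.1, fun hxX => hx.2 (subset_toMeasurable _ _ hxX)⟩
    have harea : (∫⁻ x in t, ENNReal.ofReal |(fderiv ℝ y x).det|) = volume (y '' t) :=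
      lintegral_abs_det_fderiv_eq_addHaar_image volume htm
        (fun x hx => ((hsdiff x hx.1).hasFDerivAt).hasFDerivWithinAt) hinj'
    have hae : Ω =ᵐ[volume] t := by
      rw [ae_eq_set]
      constructor
      · refine measure_mono_null ?_ (measure_union_null hΩs0 hX'0)
        intro x hx
        by_cases hxs : x ∈ s
        · exact Or.inr (Classical.byContradiction fun hc => hx.2 ⟨hxs, hc⟩)
        · exact Or.inl ⟨hx.1, hxs⟩
      · rw [diff_eq_empty.mpr (diff_subset.trans hsΩ)]; simp
    have h1 : (∫⁻ x in Ω, ENNReal.ofReal (detG y x))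
        = ∫⁻ x in t, ENNReal.ofReal |(fderiv ℝ y x).det| := by
      rw [setLIntegral_congr hae]
      refine setLIntegral_congr_fun htm (fun x hx => ?_)
      rw [← detG_eq, abs_of_pos (hsdet x hx.1)]
    have h2 : ∫ x in Ω, detG y x = (volume (y '' t)).toReal := by
      rw [← harea, ← h1, ← hinteq, ENNReal.toReal_ofReal (integral_nonneg_of_ae hnn)]
    rw [h2]
    exact ENNReal.toReal_mono himfin.ne
      (measure_mono (image_mono (diff_subset.trans hsΩ)))
  · -- Ciarlet–Nečas ⇒ a.e. injective
    intro hCN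
    set F : V3 → ENNReal := fun x => ENNReal.ofReal |(fderiv ℝ y x).det| with hF_def
    have hFdetG : F = fun x => ENNReal.ofReal |detG y x| := by
      funext x; rw [hF_def, detG_eq]
    have hFmeas : Measurable F := by
      rw [hFdetG]
      exact ENNReal.measurable_ofReal.comp (measurable_detG y).abs
    set T := ∫⁻ x in s, F x with hT_def
    have hsΩae : Ω =ᵐ[volume] s := by
      rw [ae_eq_set]
      exact ⟨hΩs0, by rw [diff_eq_empty.mpr hsΩ]; simp⟩
    have hTΩ : (∫⁻ x in Ω, ENNReal.ofReal (detG y x)) = T := by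
      rw [hT_def, setLIntegral_congr hsΩae]
      refine setLIntegral_congr_fun hsm (fun x hx => ?_)
      show ENNReal.ofReal (detG y x) = ENNReal.ofReal |(fderiv ℝ y x).det|
      rw [← detG_eq, abs_of_pos (hsdet x hx)]
    have hTfin : T ≠ ⊤ := by rw [← hTΩ]; exact hdetfin.ne
    have h2 : volume (y '' Ω) ≤ volume (y '' s) := by
      have hsubun : y '' Ω ⊆ y '' s ∪ y '' (Ω \ s) := by
        rw [← image_union]
        exact image_mono fun x hx => by
          by_cases hxs : x ∈ s
          · exact Or.inl hxs
          · exact Or.inr ⟨hx, hxs⟩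
      calc volume (y '' Ω) ≤ volume (y '' s) + volume (y '' (Ω \ s)) :=
            (measure_mono hsubun).trans (measure_union_le _ _)
        _ = volume (y '' s) := by
            rw [hLusin (Ω \ s) (diff_subset.trans subset_closure) hΩs0, add_zero]
    have h3 : T ≤ volume (y '' Ω) := by
      rw [← hTΩ, ← hinteq]
      exact le_trans (ENNReal.ofReal_le_ofReal hCN) ENNReal.ofReal_toReal_le
    have h1 : volume (y '' s) ≤ T :=
      addHaar_image_le_lintegral_abs_det_fderiv volume hsm
        (fun x hx => ((hsdiff x hx).hasFDerivAt).hasFDerivWithinAt)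
    have hkey : volume (y '' s) = T := le_antisymm h1 (h3.trans h2)
    -- sub-additivity forces equality on every measurable subset of `s`
    have hsub : ∀ t : Set V3, MeasurableSet t → t ⊆ s →
        volume (y '' t) = ∫⁻ x in t, F x := by
      intro t htm hts
      have ha : volume (y '' t) ≤ ∫⁻ x in t, F x :=
        addHaar_image_le_lintegral_abs_det_fderiv volume htm
          (fun x hx => ((hsdiff x (hts hx)).hasFDerivAt).hasFDerivWithinAt)
      have hb : volume (y '' (s \ t)) ≤ ∫⁻ x in s \ t, F x :=
        addHaar_image_le_lintegral_abs_det_fderiv volume (hsm.diff htm)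
          (fun x hx => ((hsdiff x hx.1).hasFDerivAt).hasFDerivWithinAt)
      have hsplit : (∫⁻ x in t, F x) + ∫⁻ x in s \ t, F x = T := by
        rw [hT_def, ← lintegral_union (hsm.diff htm) disjoint_sdiff_self_right,
          union_diff_cancel hts]
      have hdfin : (∫⁻ x in s \ t, F x) ≠ ⊤ := by
        refine ne_top_of_le_ne_top hTfin ?_
        rw [hT_def]
        exact lintegral_mono_set diff_subset
      have himg : T ≤ volume (y '' t) + volume (y '' (s \ t)) := by
        rw [← hkey]
        refine le_trans (measure_mono ?_) (measure_union_le _ _)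
        rw [← image_union, union_diff_cancel hts]
      have hc : (∫⁻ x in t, F x) ≤ volume (y '' t) := by
        have hchain : (∫⁻ x in t, F x) + ∫⁻ x in s \ t, F x
            ≤ volume (y '' t) + ∫⁻ x in s \ t, F x := by
          rw [hsplit]
          exact himg.trans (add_le_add le_rfl hb)
        exact (ENNReal.add_le_add_iff_right hdfin).mp hchain
      exact le_antisymm ha hc
    -- countable topological basis, bad set
    obtain ⟨bb, hbbc, -, hbasis⟩ := TopologicalSpace.exists_countable_basis V3
    have hymeas : ∀ G : Set V3, MeasurableSet G → MeasurableSet (Ω ∩ y ⁻¹' G) := by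
      intro G hG
      have hyc : ContinuousOn y Ω := hcont.mono subset_closure
      have h1 : Measurable (Ω.restrict y) := hyc.restrict.measurable
      have h2 := hΩm.subtype_image (h1 hG)
      convert h2 using 1
      ext x
      simp only [mem_inter_iff, mem_image, mem_preimage, Set.restrict_apply, Subtype.exists,
        exists_and_right, exists_eq_right]
      constructor
      · rintro ⟨hxΩ, hxG⟩; exact ⟨hxΩ, hxG⟩
      · rintro ⟨hxΩ, hxG⟩; exact ⟨hxΩ, hxG⟩
    set Bad := ⋃ U ∈ bb, ((s ∩ U) ∩ y ⁻¹' (toMeasurable volume (y '' (s \ U)))) with hBad_def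
    have hBad0 : volume Bad = 0 := by
      rw [hBad_def, measure_biUnion_null_iff hbbc]
      intro U hU
      set G := toMeasurable volume (y '' (s \ U)) with hG_def
      set H := toMeasurable volume (y '' (s ∩ U)) with hH_def
      have hGm : MeasurableSet G := measurableSet_toMeasurable _ _
      have hHm : MeasurableSet H := measurableSet_toMeasurable _ _
      have hUo : IsOpen U := hbasis.isOpen hU
      set B := (s ∩ U) ∩ y ⁻¹' G with hB_def
      have hBs : B ⊆ s := fun x hx => hx.1.1
      have hBm : MeasurableSet B := by
        have hBeq : B = (s ∩ U) ∩ (Ω ∩ y ⁻¹' G) := by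
          ext x
          constructor
          · rintro ⟨hx1, hx2⟩; exact ⟨hx1, hsΩ hx1.1, hx2⟩
          · rintro ⟨hx1, hx2⟩; exact ⟨hx1, hx2.2⟩
        rw [hBeq]
        exact (hsm.inter hUo.measurableSet).inter (hymeas G hGm)
      have hHv : volume H = ∫⁻ x in s ∩ U, F x := by
        rw [hH_def, measure_toMeasurable]
        exact hsub _ (hsm.inter hUo.measurableSet) inter_subset_left
      have hGv : volume G = ∫⁻ x in s \ U, F x := by
        rw [hG_def, measure_toMeasurable]
        exact hsub _ (hsm.diff hUo.measurableSet) diff_subset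
      have hsum : volume H + volume G = T := by
        rw [hHv, hGv, hT_def, ← lintegral_union (hsm.diff hUo.measurableSet)
          (Set.disjoint_left.mpr fun x hx1 hx2 => hx2.2 hx1.2), inter_union_diff]
      have hcover : y '' s ⊆ H ∪ G := by
        rintro z ⟨x, hx, rfl⟩
        by_cases hxU : x ∈ U
        · exact Or.inl (subset_toMeasurable _ _ ⟨x, ⟨hx, hxU⟩, rfl⟩)
        · exact Or.inr (subset_toMeasurable _ _ ⟨x, ⟨hx, hxU⟩, rfl⟩)
      have hunfin : volume (H ∪ G) ≠ ⊤ := by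
        refine ne_top_of_le_ne_top ?_ (measure_union_le H G)
        rw [hsum]
        exact hTfin
      have hHG0 : volume (H ∩ G) = 0 := by
        have e1 : volume (H ∪ G) + volume (H ∩ G) = volume H + volume G :=
          measure_union_add_inter H hGm
        have e2 : volume H + volume G ≤ volume (H ∪ G) := by
          rw [hsum, ← hkey]
          exact measure_mono hcover
        have e3 : volume (H ∪ G) + volume (H ∩ G) ≤ volume (H ∪ G) + 0 := by
          rw [add_zero, e1]
          exact e2
        have := (ENNReal.add_le_add_iff_left hunfin).mp e3
        exact le_antisymm this zero_le
      have himB : volume (y '' B) = 0 := by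
        refine measure_mono_null ?_ hHG0
        rintro z ⟨x, hx, rfl⟩
        exact ⟨subset_toMeasurable _ _ ⟨x, hx.1, rfl⟩, hx.2⟩
      have hlB : (∫⁻ x in B, F x) = 0 := by
        rw [← hsub B hBm hBs]
        exact himB
      have hae0 := (setLIntegral_eq_zero_iff hBm hFmeas).mp hlB
      refine measure_mono_null ?_ (ae_iff.mp hae0)
      intro x hx
      simp only [mem_setOf_eq, Classical.not_imp]
      refine ⟨hx, ?_⟩
      have hpos : 0 < detG y x := hsdet x (hBs hx)
      rw [hFdetG]
      simp only [ne_eq]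
      rw [abs_of_pos hpos]
      exact (ENNReal.ofReal_pos.mpr hpos).ne'
    -- conclusion: `y` is injective on `s \ Bad`
    refine ⟨Ω \ (s \ Bad), diff_subset, ?_, ?_⟩
    · refine measure_mono_null ?_ (measure_union_null hΩs0 hBad0)
      intro x hx
      by_cases hxs : x ∈ s
      · exact Or.inr (Classical.byContradiction fun hc => hx.2 ⟨hxs, hc⟩)
      · exact Or.inl ⟨hx.1, hxs⟩
    · have hΩdd : Ω \ (Ω \ (s \ Bad)) = s \ Bad := by
        rw [diff_diff_cancel_left ((diff_subset).trans hsΩ)]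
      rw [hΩdd]
      intro x1 hx1 x2 hx2 heq
      by_contra hne
      obtain ⟨U, hUb, hx1U, hUsub⟩ := hbasis.exists_subset_of_mem_open
        (show x1 ∈ ({x2}ᶜ : Set V3) from hne) isOpen_compl_singleton
      have hx2U : x2 ∉ U := fun h => hUsub h rfl
      apply hx1.2
      rw [hBad_def]
      exact mem_biUnion hUb
        ⟨⟨hx1.1, hx1U⟩, subset_toMeasurable _ _ ⟨x2, ⟨hx2.1, hx2U⟩, heq.symm⟩⟩
end
end

section
/- Let q = (y,m) ∈ 𝒬, let R ∈ SO(3), c ∈ ℝ³, and define the rigid motion T(ξ) := Rξ + c. Set ỹ := T ∘ y and m̃ := R·(m ∘ T^{-1}) on Ω^{ỹ} = T(Ω^y). Then the state q̃ = (ỹ, m̃) satisfies 𝒵(q̃) = 𝒵(q) almost everywhere in Ω, and hence 𝒟(q̃, q) = 0. -/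
noncomputable section
open MeasureTheory Set Filter Topology

/-- The admissible deformation class `𝒴`: `W^{1,p}` regularity, positive Jacobian a.e.,
a.e. injectivity, and boundary condition `y = ȳ` on `Γ`. -/
def inY (Ω Γ : Set V3) (ybar : V3 → V3) (p : ℝ) (y : V3 → V3) : Prop :=
  W1p y Ω p ∧ (∀ᵐ x ∂volume.restrict Ω, 0 < detG y x) ∧ AEInjOn y Ω ∧ Set.EqOn y ybar Γ

/-- Admissible magnetization: `m ∈ W^{1,2}(Ω^y; S²)`. -/
def inMag (y : V3 → V3) (Ω : Set V3) (m : V3 → V3) : Prop :=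
  (∀ᵐ ξ ∂volume.restrict (defConfig y Ω), vnorm (m ξ) = 1) ∧
  (∀ᵐ ξ ∂volume.restrict (defConfig y Ω), DifferentiableAt ℝ m ξ) ∧
  (∫⁻ ξ in defConfig y Ω, ENNReal.ofReal (mnorm (gradM m ξ) ^ 2)) < ⊤

/-- The homogeneous Sobolev space `V^{1,2}(ℝ³) = {φ ∈ L²_loc : ∇φ ∈ L²(ℝ³;ℝ³)}`. -/
def inV12 (φ : V3 → ℝ) : Prop :=
  (∀ᵐ ξ, DifferentiableAt ℝ φ ξ) ∧
  (∀ K : Set V3, IsCompact K → (∫⁻ ξ in K, ENNReal.ofReal ((φ ξ) ^ 2)) < ⊤) ∧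
  (∫⁻ ξ, ENNReal.ofReal (vnorm (gradS φ ξ) ^ 2)) < ⊤

/-- `ζ` is a weak solution of the magnetostatic Maxwell equation `Δζ = div (χ_{Ω^y} m)`. -/
def IsStrayField (Ω : Set V3) (y m : V3 → V3) (ζ : V3 → ℝ) : Prop :=
  inV12 ζ ∧ ∀ φ : V3 → ℝ, inV12 φ →
    (∫ ξ, ∑ j, gradS ζ ξ j * gradS φ ξ j) =
      ∫ ξ in defConfig y Ω, ∑ j, m ξ j * gradS φ ξ j

/-- `curl m · m`, the Dzyaloshinskii–Moriya interaction density. -/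
def curlDot (m : V3 → V3) (ξ : V3) : ℝ :=
  (gradM m ξ 2 1 - gradM m ξ 1 2) * m ξ 0 +
  (gradM m ξ 0 2 - gradM m ξ 2 0) * m ξ 1 +
  (gradM m ξ 1 0 - gradM m ξ 0 1) * m ξ 2

/-- The magnetoelastic energy
`E(q) = ∫_Ω W(∇y, m∘y) + α ∫_{Ω^y} |∇m|² + (μ₀/2) ∫_{ℝ³} |∇ζ_m|² + κ ∫_{Ω^y} curl m · m`. -/
def energyE (Ω : Set V3) (W : M3 → V3 → ℝ) (α μ₀ κ : ℝ) (y m : V3 → V3) (ζ : V3 → ℝ) : ℝ :=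
  (∫ x in Ω, W (gradM y x) (m (y x))) +
  α * (∫ ξ in defConfig y Ω, mnorm (gradM m ξ) ^ 2) +
  μ₀ / 2 * (∫ ξ, vnorm (gradS ζ ξ) ^ 2) +
  κ * (∫ ξ in defConfig y Ω, curlDot m ξ)

/-- `E(q) < +∞`: the elastic energy density is integrable (all the remaining terms of the
energy are finite for admissible states). -/
def FiniteElastic (Ω : Set V3) (W : M3 → V3 → ℝ) (y m : V3 → V3) : Prop :=
  IntegrableOn (fun x => W (gradM y x) (m (y x))) Ω

/-- Continuity of the stored energy density on `ℝ^{3×3}_+ × S²`. -/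
def WCont (W : M3 → V3 → ℝ) : Prop :=
  ContinuousOn (fun q : M3 × V3 => W q.1 q.2) {q : M3 × V3 | 0 < q.1.det ∧ vnorm q.2 = 1}

/-- `W ≥ 0`. -/
def WNonneg (W : M3 → V3 → ℝ) : Prop := ∀ F lam, 0 ≤ W F lam

/-- Coercivity: `W(F,λ) ≥ K |F|^p + γ(det F)` with `K > 0` and `γ` Borel, nonnegative and
blowing up under extreme compression. -/
def WCoercive (W : M3 → V3 → ℝ) (p K : ℝ) (γ : ℝ → ℝ) : Prop :=
  0 < K ∧ Measurable γ ∧ (∀ d : ℝ, 0 ≤ γ d) ∧ Tendsto γ (𝓝[>] 0) atTop ∧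
  ∀ F lam, 0 < F.det → vnorm lam = 1 → K * mnorm F ^ p + γ F.det ≤ W F lam

/-- Polyconvexity: `W(F,λ) = Ŵ(F, cof F, det F, λ)` with `Ŵ(·,·,·,λ)` convex. -/
def WPolyconvex (W : M3 → V3 → ℝ) : Prop :=
  ∃ Wh : M3 × M3 × ℝ → V3 → ℝ,
    (∀ t lam, 0 ≤ Wh t lam) ∧
    (∀ lam, vnorm lam = 1 → ConvexOn ℝ {t : M3 × M3 × ℝ | 0 < t.2.2} (fun t => Wh t lam)) ∧
    ∀ F lam, 0 < F.det → vnorm lam = 1 → W F lam = Wh (F, cofM F, F.det) lam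

/-- The Lagrangean magnetization `𝒵(q) = (adj ∇y) (m ∘ y)`. -/
def Zmag (y m : V3 → V3) (x : V3) : V3 := (adjM (gradM y x)).mulVec (m (y x))

/-- The dissipation distance `𝒟(q,q̂) = ∫_Ω |𝒵(q) − 𝒵(q̂)| dx`. -/
def dissD (Ω : Set V3) (y m y' m' : V3 → V3) : ℝ :=
  ∫ x in Ω, vnorm (Zmag y m x - Zmag y' m' x)

/-- Rigid motions create no dissipation.
Let `q = (y,m) ∈ 𝒬`, `R ∈ SO(3)`, `c ∈ ℝ³` and `T(ξ) = Rξ + c`. With `ỹ = T ∘ y` and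
`m̃ = R (m ∘ T⁻¹)` on `Ω^{ỹ} = T(Ω^y)`, the state `q̃ = (ỹ,m̃)` satisfies `𝒵(q̃) = 𝒵(q)`
a.e. in `Ω`, hence `𝒟(q̃,q) = 0`. -/
theorem rigid_motion_zero_dissipation
    (Ω : Set V3) (hΩo : IsOpen Ω) (hΩb : Bornology.IsBounded Ω) (hΩne : Ω.Nonempty)
    (p : ℝ) (hp : 3 < p)
    (y m : V3 → V3)
    (hy : W1p y Ω p)
    (hdet : ∀ᵐ x ∂volume.restrict Ω, 0 < detG y x)
    (hinj : AEInjOn y Ω)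
    (hm : inMag y Ω m)
    (R : M3) (hR : Matrix.transpose R * R = 1) (hRdet : R.det = 1) (c : V3)
    (T : V3 → V3) (hT : ∀ ξ, T ξ = R.mulVec ξ + c)
    (yt : V3 → V3) (hyt : ∀ x, yt x = T (y x))
    (mt : V3 → V3) (hmt : ∀ ξ, mt ξ = R.mulVec (m ((Matrix.transpose R).mulVec (ξ - c)))) :
    defConfig yt Ω = T '' defConfig y Ω ∧
    (∀ᵐ x ∂volume.restrict Ω, Zmag yt mt x = Zmag y m x) ∧
    dissD Ω yt mt y m = 0 := by
  have hRR : R * Matrix.transpose R = 1 := mul_eq_one_comm.mp hR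
  have hadjR : Matrix.adjugate R = Matrix.transpose R := by
    have h1 : Matrix.adjugate R * R = 1 := by
      rw [Matrix.adjugate_mul, hRdet, one_smul]
    calc Matrix.adjugate R = Matrix.adjugate R * (R * Matrix.transpose R) := by
          rw [hRR, mul_one]
      _ = (Matrix.adjugate R * R) * Matrix.transpose R := by rw [mul_assoc]
      _ = Matrix.transpose R := by rw [h1, one_mul]
  have hTinj : Function.Injective T := by
    intro a b hab
    rw [hT, hT] at hab
    have h2 : R.mulVec a = R.mulVec b := by
      have := congrArg (fun v => v - c) hab
      simpa using this
    have := congrArg (fun v => (Matrix.transpose R).mulVec v) h2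
    simpa [Matrix.mulVec_mulVec, hR] using this
  have hytS : ∀ S : Set V3, yt '' S = T '' (y '' S) := by
    intro S
    rw [← Set.image_comp]
    exact Set.image_congr fun x _ => hyt x
  have haeZ : ∀ᵐ x ∂volume.restrict Ω, Zmag yt mt x = Zmag y m x := by
    set L : V3 →L[ℝ] V3 := LinearMap.toContinuousLinearMap (Matrix.mulVecLin R) with hLdef
    have hL : ∀ v, L v = R.mulVec v := fun v => rfl
    filter_upwards [hy.2.1] with x hx
    have hTd : ∀ ξ : V3, HasFDerivAt T L ξ := by
      intro ξ
      have : T = fun η => L η + c := funext fun η => by rw [hT, hL]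
      rw [this]
      exact (L.hasFDerivAt).add_const c
    have hder : HasFDerivAt yt (L.comp (fderiv ℝ y x)) x := by
      have h := (hTd (y x)).comp x hx.hasFDerivAt
      have hyteq : yt = T ∘ y := funext hyt
      rw [hyteq]; exact h
    have hgrad : gradM yt x = R * gradM y x := by
      have hfd : fderiv ℝ yt x = L.comp (fderiv ℝ y x) := hder.fderiv
      ext i j
      simp [gradM, hfd, hL, Matrix.mul_apply, Matrix.mulVec, dotProduct, Fin.sum_univ_three]
    have hmtyt : mt (yt x) = R.mulVec (m (y x)) := by
      rw [hmt, hyt, hT]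
      have : (Matrix.transpose R).mulVec (R.mulVec (y x) + c - c) = y x := by
        rw [add_sub_cancel_right, Matrix.mulVec_mulVec, hR, Matrix.one_mulVec]
      rw [this]
    unfold Zmag adjM
    rw [hgrad, hmtyt, Matrix.adjugate_mul_distrib, hadjR, Matrix.mulVec_mulVec,
      mul_assoc, hR, mul_one]
  refine ⟨?_, ?_, ?_⟩
  · unfold defConfig
    rw [hytS, hytS, Set.image_diff hTinj]
  · exact haeZ
  · unfold dissD
    rw [show (0:ℝ) = ∫ x in Ω, (0:ℝ) from (integral_zero _ _).symm]
    apply integral_congr_ae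
    filter_upwards [haeZ] with x hx
    simp [hx, vnorm]
end
end
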